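/- Let f : ℂ² → ℂ² preserve unit distance, with f((0,0)) = (0,0), f((1,0)) = (1,0), f((0,1)) = (0,1), and let ρ : ℝ → ℂ be a field homomorphism such that for all x₁, x₂ ∈ ℂ, f((x₁,x₂)) equals (ρ(Re x₁)+ρ(Im x₁)·i, ρ(Re x₂)+ρ(Im x₂)·i) or (ρ(Re x₁)−ρ(Im x₁)·i, ρ(Re x₂)−ρ(Im x₂)·i). Define A = {(x₁,x₂) ∈ ℂ² : f((x₁,x₂)) = (ρ(Re x₁)+ρ(Im x₁)·i, ρ(Re x₂)+ρ(Im x₂)·i)} and B = {(x₁,x₂) ∈ ℂ² : f((x₁,x₂)) = (ρ(Re x₁)−ρ(Im x₁)·i, ρ(Re x₂)−ρ(Im x₂)·i)}. Then for every X ∈ ℂ² \ ℝ²: if (i,i) ∈ A then X ∈ A, and if (i,i) ∈ B then X ∈ B. -/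
import Mathlib
open Complex

noncomputable def gg (ρ : ℝ →+* ℂ) (e : ℂ) (x : ℂ) : ℂ :=
  ρ x.re + e * ρ x.im * Complex.I

section
variable (ρ : ℝ →+* ℂ) (e : ℂ)

lemma gg_plus (x : ℂ) : gg ρ 1 x = ρ x.re + ρ x.im * I := by simp [gg]

lemma gg_minus (x : ℂ) : gg ρ (-1) x = ρ x.re - ρ x.im * I := by simp [gg]; ring

lemma gg_sub (x y : ℂ) : gg ρ e (x - y) = gg ρ e x - gg ρ e y := by
  simp [gg, Complex.sub_re, Complex.sub_im, map_sub]; ring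

lemma gg_add (x y : ℂ) : gg ρ e (x + y) = gg ρ e x + gg ρ e y := by
  simp [gg, Complex.add_re, Complex.add_im, map_add]; ring

lemma gg_one : gg ρ e 1 = 1 := by simp [gg]

lemma gg_conj_plus (x : ℂ) : gg ρ (-1) ((starRingEnd ℂ) x) = gg ρ 1 x := by
  simp [gg]

lemma gg_conj_minus (x : ℂ) : gg ρ 1 ((starRingEnd ℂ) x) = gg ρ (-1) x := by
  simp [gg]

variable {e}

lemma gg_sq (he : e ^ 2 = 1) (x : ℂ) : gg ρ e (x ^ 2) = gg ρ e x ^ 2 := by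
  simp only [gg, pow_two, Complex.mul_re, Complex.mul_im, map_sub, map_add, map_mul]
  linear_combination (-(ρ x.im : ℂ) ^ 2 * Complex.I ^ 2) * he + (-(ρ x.im : ℂ) ^ 2) * Complex.I_sq

lemma gg_eq_zero (he : e ^ 2 = 1) {z : ℂ} (hz : gg ρ e z = 0) : z = 0 := by
  have key : gg ρ e z * gg ρ e ((starRingEnd ℂ) z) = ρ (z.re ^ 2 + z.im ^ 2) := by
    simp only [gg, Complex.conj_re, Complex.conj_im, map_add, map_pow, map_neg, pow_two, map_mul]
    linear_combination (-(ρ z.im : ℂ) ^ 2 * Complex.I ^ 2) * he + (-(ρ z.im : ℂ) ^ 2) * Complex.I_sq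
  rw [hz, zero_mul] at key
  have h0 : z.re ^ 2 + z.im ^ 2 = 0 := by
    apply RingHom.injective ρ
    rw [map_zero]; exact key.symm
  have hre : z.re = 0 := by nlinarith [sq_nonneg z.re, sq_nonneg z.im]
  have him : z.im = 0 := by nlinarith [sq_nonneg z.re, sq_nonneg z.im]
  exact Complex.ext (by simp [hre]) (by simp [him])

lemma gg_inj (he : e ^ 2 = 1) {z w : ℂ} (h : gg ρ e z = gg ρ e w) : z = w := by
  have : z - w = 0 := gg_eq_zero ρ he (by rw [gg_sub, h, sub_self])
  exact sub_eq_zero.mp this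

lemma gg_dist (he : e ^ 2 = 1) (x₁ x₂ y₁ y₂ : ℂ) :
    (gg ρ e x₁ - gg ρ e y₁) ^ 2 + (gg ρ e x₂ - gg ρ e y₂) ^ 2 =
      gg ρ e ((x₁ - y₁) ^ 2 + (x₂ - y₂) ^ 2) := by
  rw [gg_add, gg_sq ρ he, gg_sq ρ he, gg_sub, gg_sub]

lemma reim_one {x y : ℝ} (h : (x : ℂ) + (y : ℂ) * I = 1) : x = 1 ∧ y = 0 := by
  have h1 := congrArg Complex.re h
  have h2 := congrArg Complex.im h
  simp at h1 h2
  exact ⟨h1, h2⟩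

end

lemma main_lemma (f : ℂ × ℂ → ℂ × ℂ)
    (hf : ∀ X Y : ℂ × ℂ, (X.1 - Y.1) ^ 2 + (X.2 - Y.2) ^ 2 = 1 →
      ((f X).1 - (f Y).1) ^ 2 + ((f X).2 - (f Y).2) ^ 2 = 1)
    (ρ : ℝ →+* ℂ)
    (hρ : ∀ x₁ x₂ : ℂ,
      f (x₁, x₂) = (ρ x₁.re + ρ x₁.im * Complex.I, ρ x₂.re + ρ x₂.im * Complex.I) ∨
      f (x₁, x₂) = (ρ x₁.re - ρ x₁.im * Complex.I, ρ x₂.re - ρ x₂.im * Complex.I))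
    (e : ℂ) (he : e = 1 ∨ e = -1)
    (x₁ x₂ : ℂ) (hX : ¬(x₁.im = 0 ∧ x₂.im = 0))
    (h0 : f (Complex.I, Complex.I) = (gg ρ e Complex.I, gg ρ e Complex.I)) :
    f (x₁, x₂) = (gg ρ e x₁, gg ρ e x₂) := by
  have he2 : e ^ 2 = 1 := by rcases he with h | h <;> simp [h]
  -- propagation along a "good edge"
  have prop : ∀ p₁ p₂ q₁ q₂ : ℂ, f (p₁, p₂) = (gg ρ e p₁, gg ρ e p₂) →
      (p₁ - q₁) ^ 2 + (p₂ - q₂) ^ 2 = 1 →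
      (p₁ - (starRingEnd ℂ) q₁) ^ 2 + (p₂ - (starRingEnd ℂ) q₂) ^ 2 ≠ 1 →
      f (q₁, q₂) = (gg ρ e q₁, gg ρ e q₂) := by
    intro p₁ p₂ q₁ q₂ hfP h1 h2
    have hcontra : f (q₁, q₂) = (gg ρ e ((starRingEnd ℂ) q₁), gg ρ e ((starRingEnd ℂ) q₂)) →
        False := by
      intro hQ'
      apply h2
      have h3 := hf (p₁, p₂) (q₁, q₂) h1
      simp only [hfP, hQ'] at h3
      rw [gg_dist ρ he2] at h3
      exact gg_inj ρ he2 (h3.trans (gg_one ρ e).symm)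
    have hQ := hρ q₁ q₂
    rw [← gg_plus ρ q₁, ← gg_plus ρ q₂, ← gg_minus ρ q₁, ← gg_minus ρ q₂] at hQ
    rcases he with he1 | he1 <;> subst he1
    · rcases hQ with h | h
      · exact h
      · exact absurd (by rw [h, ← gg_conj_minus, ← gg_conj_minus]) hcontra
    · rcases hQ with h | h
      · exact absurd (by rw [h, ← gg_conj_plus, ← gg_conj_plus]) hcontra
      · exact h
  -- step by a real unit vector
  have stepReal : ∀ (z₁ z₂ : ℂ) (r₁ r₂ : ℝ), r₁ ^ 2 + r₂ ^ 2 = 1 →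
      ¬(z₁.im = 0 ∧ z₂.im = 0) → f (z₁, z₂) = (gg ρ e z₁, gg ρ e z₂) →
      f (z₁ + (r₁ : ℂ), z₂ + (r₂ : ℂ)) = (gg ρ e (z₁ + (r₁ : ℂ)), gg ρ e (z₂ + (r₂ : ℂ))) := by
    intro z₁ z₂ r₁ r₂ hr hP hfP
    apply prop z₁ z₂ _ _ hfP
    · have h : ((r₁ : ℂ)) ^ 2 + (r₂ : ℂ) ^ 2 = 1 := by exact_mod_cast hr
      linear_combination h
    · intro hcon
      have e1 : z₁ - (starRingEnd ℂ) (z₁ + (r₁ : ℂ)) = ((2 * z₁.im : ℝ) : ℂ) * I - (r₁ : ℂ) := by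
        rw [map_add, Complex.conj_ofReal,
          show z₁ - ((starRingEnd ℂ) z₁ + (r₁ : ℂ)) = (z₁ - (starRingEnd ℂ) z₁) - (r₁ : ℂ) from by
            ring, Complex.sub_conj]
      have e2 : z₂ - (starRingEnd ℂ) (z₂ + (r₂ : ℂ)) = ((2 * z₂.im : ℝ) : ℂ) * I - (r₂ : ℂ) := by
        rw [map_add, Complex.conj_ofReal,
          show z₂ - ((starRingEnd ℂ) z₂ + (r₂ : ℂ)) = (z₂ - (starRingEnd ℂ) z₂) - (r₂ : ℂ) from by
            ring, Complex.sub_conj]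
      rw [e1, e2] at hcon
      have hval : (((2 * z₁.im : ℝ) : ℂ) * I - (r₁ : ℂ)) ^ 2 + (((2 * z₂.im : ℝ) : ℂ) * I - (r₂ : ℂ)) ^ 2
          = ((r₁ ^ 2 + r₂ ^ 2 - 4 * (z₁.im ^ 2 + z₂.im ^ 2) : ℝ) : ℂ)
            + ((-4 * (z₁.im * r₁ + z₂.im * r₂) : ℝ) : ℂ) * I := by
        push_cast
        linear_combination (4 * (z₁.im : ℂ) ^ 2 + 4 * (z₂.im : ℂ) ^ 2) * Complex.I_sq
      rw [hval] at hcon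
      obtain ⟨hA, hB⟩ := reim_one hcon
      have h1 : z₁.im = 0 := by nlinarith [sq_nonneg z₁.im, sq_nonneg z₂.im]
      have h2 : z₂.im = 0 := by nlinarith [sq_nonneg z₁.im, sq_nonneg z₂.im]
      exact hP ⟨h1, h2⟩
  -- step changing the imaginary part of the second coordinate
  have stepIm2 : ∀ (z₁ z₂ : ℂ) (t : ℝ),
      ¬(z₁.im = 0 ∧ z₁.im ^ 2 + z₂.im ^ 2 + z₂.im * t = 0) →
      f (z₁, z₂) = (gg ρ e z₁, gg ρ e z₂) →
      f (z₁ + ((Real.sqrt (1 + t ^ 2) : ℝ) : ℂ), z₂ + (t : ℂ) * I) =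
        (gg ρ e (z₁ + ((Real.sqrt (1 + t ^ 2) : ℝ) : ℂ)), gg ρ e (z₂ + (t : ℂ) * I)) := by
    intro z₁ z₂ t hP hfP
    set u : ℝ := Real.sqrt (1 + t ^ 2) with hu
    have hu2 : (u : ℂ) ^ 2 = 1 + (t : ℂ) ^ 2 := by
      have : u ^ 2 = 1 + t ^ 2 := Real.sq_sqrt (by positivity)
      exact_mod_cast this
    have hupos : 0 < u := Real.sqrt_pos.mpr (by positivity)
    apply prop z₁ z₂ _ _ hfP
    · linear_combination hu2 + (t : ℂ) ^ 2 * Complex.I_sq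
    · intro hcon
      have e1 : z₁ - (starRingEnd ℂ) (z₁ + (u : ℂ)) = ((2 * z₁.im : ℝ) : ℂ) * I - (u : ℂ) := by
        rw [map_add, Complex.conj_ofReal,
          show z₁ - ((starRingEnd ℂ) z₁ + (u : ℂ)) = (z₁ - (starRingEnd ℂ) z₁) - (u : ℂ) from by
            ring, Complex.sub_conj]
      have e2 : z₂ - (starRingEnd ℂ) (z₂ + (t : ℂ) * I) = ((2 * z₂.im : ℝ) : ℂ) * I + (t : ℂ) * I := by
        rw [map_add, map_mul, Complex.conj_ofReal, Complex.conj_I,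
          show z₂ - ((starRingEnd ℂ) z₂ + (t : ℂ) * -I) = (z₂ - (starRingEnd ℂ) z₂) + (t : ℂ) * I from by
            ring, Complex.sub_conj]
      rw [e1, e2] at hcon
      have hval : (((2 * z₁.im : ℝ) : ℂ) * I - (u : ℂ)) ^ 2 + (((2 * z₂.im : ℝ) : ℂ) * I + (t : ℂ) * I) ^ 2
          = ((1 - 4 * (z₁.im ^ 2 + z₂.im ^ 2 + z₂.im * t) : ℝ) : ℂ)
            + ((-4 * (z₁.im * u) : ℝ) : ℂ) * I := by
        push_cast
        linear_combination (4 * (z₁.im : ℂ) ^ 2 + (2 * (z₂.im : ℂ) + (t : ℂ)) ^ 2) * Complex.I_sq + hu2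
      rw [hval] at hcon
      obtain ⟨hA, hB⟩ := reim_one hcon
      have h1 : z₁.im * u = 0 := by linarith
      rcases mul_eq_zero.mp h1 with h1 | h1
      · exact hP ⟨h1, by linarith⟩
      · linarith
  -- step changing the imaginary part of the first coordinate
  have stepIm1 : ∀ (z₁ z₂ : ℂ) (t : ℝ),
      ¬(z₂.im = 0 ∧ z₁.im ^ 2 + z₂.im ^ 2 + z₁.im * t = 0) →
      f (z₁, z₂) = (gg ρ e z₁, gg ρ e z₂) →
      f (z₁ + (t : ℂ) * I, z₂ + ((Real.sqrt (1 + t ^ 2) : ℝ) : ℂ)) =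
        (gg ρ e (z₁ + (t : ℂ) * I), gg ρ e (z₂ + ((Real.sqrt (1 + t ^ 2) : ℝ) : ℂ))) := by
    intro z₁ z₂ t hP hfP
    set u : ℝ := Real.sqrt (1 + t ^ 2) with hu
    have hu2 : (u : ℂ) ^ 2 = 1 + (t : ℂ) ^ 2 := by
      have : u ^ 2 = 1 + t ^ 2 := Real.sq_sqrt (by positivity)
      exact_mod_cast this
    have hupos : 0 < u := Real.sqrt_pos.mpr (by positivity)
    apply prop z₁ z₂ _ _ hfP
    · linear_combination hu2 + (t : ℂ) ^ 2 * Complex.I_sq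
    · intro hcon
      have e1 : z₁ - (starRingEnd ℂ) (z₁ + (t : ℂ) * I) = ((2 * z₁.im : ℝ) : ℂ) * I + (t : ℂ) * I := by
        rw [map_add, map_mul, Complex.conj_ofReal, Complex.conj_I,
          show z₁ - ((starRingEnd ℂ) z₁ + (t : ℂ) * -I) = (z₁ - (starRingEnd ℂ) z₁) + (t : ℂ) * I from by
            ring, Complex.sub_conj]
      have e2 : z₂ - (starRingEnd ℂ) (z₂ + (u : ℂ)) = ((2 * z₂.im : ℝ) : ℂ) * I - (u : ℂ) := by
        rw [map_add, Complex.conj_ofReal,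
          show z₂ - ((starRingEnd ℂ) z₂ + (u : ℂ)) = (z₂ - (starRingEnd ℂ) z₂) - (u : ℂ) from by
            ring, Complex.sub_conj]
      rw [e1, e2] at hcon
      have hval : (((2 * z₁.im : ℝ) : ℂ) * I + (t : ℂ) * I) ^ 2 + (((2 * z₂.im : ℝ) : ℂ) * I - (u : ℂ)) ^ 2
          = ((1 - 4 * (z₁.im ^ 2 + z₂.im ^ 2 + z₁.im * t) : ℝ) : ℂ)
            + ((-4 * (z₂.im * u) : ℝ) : ℂ) * I := by
        push_cast
        linear_combination ((2 * (z₁.im : ℂ) + (t : ℂ)) ^ 2 + 4 * (z₂.im : ℂ) ^ 2) * Complex.I_sq + hu2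
      rw [hval] at hcon
      obtain ⟨hA, hB⟩ := reim_one hcon
      have h1 : z₂.im * u = 0 := by linarith
      rcases mul_eq_zero.mp h1 with h1 | h1
      · exact hP ⟨h1, by linarith⟩
      · linarith
  -- a horizontal move of length at most 2 (first coordinate)
  have pairX : ∀ (z₁ z₂ : ℂ) (s : ℝ), |s| ≤ 2 → ¬(z₁.im = 0 ∧ z₂.im = 0) →
      f (z₁, z₂) = (gg ρ e z₁, gg ρ e z₂) →
      f (z₁ + (s : ℂ), z₂) = (gg ρ e (z₁ + (s : ℂ)), gg ρ e z₂) := by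
    intro z₁ z₂ s hs hP hfP
    set h : ℝ := Real.sqrt (1 - s ^ 2 / 4) with hh
    have hs2 : s ^ 2 ≤ 4 := by nlinarith [abs_nonneg s, _root_.sq_abs s]
    have hh2 : (s / 2) ^ 2 + h ^ 2 = 1 := by
      rw [hh, Real.sq_sqrt (by nlinarith)]; ring
    have st1 := stepReal z₁ z₂ (s / 2) h hh2 hP hfP
    have hP' : ¬((z₁ + ((s / 2 : ℝ) : ℂ)).im = 0 ∧ (z₂ + ((h : ℝ) : ℂ)).im = 0) := by
      simpa using hP
    have st2 := stepReal _ _ (s / 2) (-h) (by nlinarith [hh2]) hP' st1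
    have c1 : z₁ + ((s / 2 : ℝ) : ℂ) + ((s / 2 : ℝ) : ℂ) = z₁ + (s : ℂ) := by push_cast; ring
    have c2 : z₂ + ((h : ℝ) : ℂ) + ((-h : ℝ) : ℂ) = z₂ := by push_cast; ring
    rw [c1, c2] at st2
    exact st2
  -- a vertical move of length at most 2 (second coordinate)
  have pairY : ∀ (z₁ z₂ : ℂ) (s : ℝ), |s| ≤ 2 → ¬(z₁.im = 0 ∧ z₂.im = 0) →
      f (z₁, z₂) = (gg ρ e z₁, gg ρ e z₂) →
      f (z₁, z₂ + (s : ℂ)) = (gg ρ e z₁, gg ρ e (z₂ + (s : ℂ))) := by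
    intro z₁ z₂ s hs hP hfP
    set h : ℝ := Real.sqrt (1 - s ^ 2 / 4) with hh
    have hs2 : s ^ 2 ≤ 4 := by nlinarith [abs_nonneg s, _root_.sq_abs s]
    have hh2 : h ^ 2 + (s / 2) ^ 2 = 1 := by
      rw [hh, Real.sq_sqrt (by nlinarith)]; ring
    have st1 := stepReal z₁ z₂ h (s / 2) hh2 hP hfP
    have hP' : ¬((z₁ + ((h : ℝ) : ℂ)).im = 0 ∧ (z₂ + ((s / 2 : ℝ) : ℂ)).im = 0) := by
      simpa using hP
    have st2 := stepReal _ _ (-h) (s / 2) (by nlinarith [hh2]) hP' st1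
    have c1 : z₁ + ((h : ℝ) : ℂ) + ((-h : ℝ) : ℂ) = z₁ := by push_cast; ring
    have c2 : z₂ + ((s / 2 : ℝ) : ℂ) + ((s / 2 : ℝ) : ℂ) = z₂ + (s : ℂ) := by push_cast; ring
    rw [c1, c2] at st2
    exact st2
  -- arbitrary horizontal real translation
  have transX : ∀ (n : ℕ) (z₁ z₂ : ℂ) (s : ℝ), |s| ≤ 2 * n →
      ¬(z₁.im = 0 ∧ z₂.im = 0) → f (z₁, z₂) = (gg ρ e z₁, gg ρ e z₂) →
      f (z₁ + (s : ℂ), z₂) = (gg ρ e (z₁ + (s : ℂ)), gg ρ e z₂) := by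
    intro n
    induction n with
    | zero =>
      intro z₁ z₂ s hs hP hfP
      have hs0 : s = 0 := abs_eq_zero.mp (le_antisymm (by simpa using hs) (abs_nonneg s))
      subst hs0
      simpa using hfP
    | succ n ih =>
      intro z₁ z₂ s hs hP hfP
      rcases le_or_gt |s| 2 with h2 | h2
      · exact pairX z₁ z₂ s h2 hP hfP
      · push_cast at hs
        set c : ℝ := if 0 ≤ s then 2 else -2 with hc
        have hcabs : |c| ≤ 2 := by rw [hc]; split_ifs <;> norm_num
        have st1 := pairX z₁ z₂ c hcabs hP hfP
        have hP' : ¬((z₁ + (c : ℂ)).im = 0 ∧ z₂.im = 0) := by simpa using hP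
        have hrest : |s - c| ≤ 2 * n := by
          rcases le_or_gt 0 s with hsg | hsg
          · rw [hc, if_pos hsg]
            rw [_root_.abs_of_nonneg hsg] at hs h2
            rw [_root_.abs_of_nonneg (by linarith)]
            linarith
          · rw [hc, if_neg (not_le.mpr hsg)]
            rw [_root_.abs_of_neg hsg] at hs h2
            rw [_root_.abs_of_nonpos (by linarith)]
            linarith
        have st2 := ih (z₁ + (c : ℂ)) z₂ (s - c) hrest hP' st1
        have c1 : z₁ + (c : ℂ) + ((s - c : ℝ) : ℂ) = z₁ + (s : ℂ) := by push_cast; ring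
        rw [c1] at st2
        exact st2
  -- arbitrary vertical real translation
  have transY : ∀ (n : ℕ) (z₁ z₂ : ℂ) (s : ℝ), |s| ≤ 2 * n →
      ¬(z₁.im = 0 ∧ z₂.im = 0) → f (z₁, z₂) = (gg ρ e z₁, gg ρ e z₂) →
      f (z₁, z₂ + (s : ℂ)) = (gg ρ e z₁, gg ρ e (z₂ + (s : ℂ))) := by
    intro n
    induction n with
    | zero =>
      intro z₁ z₂ s hs hP hfP
      have hs0 : s = 0 := abs_eq_zero.mp (le_antisymm (by simpa using hs) (abs_nonneg s))
      subst hs0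
      simpa using hfP
    | succ n ih =>
      intro z₁ z₂ s hs hP hfP
      rcases le_or_gt |s| 2 with h2 | h2
      · exact pairY z₁ z₂ s h2 hP hfP
      · push_cast at hs
        set c : ℝ := if 0 ≤ s then 2 else -2 with hc
        have hcabs : |c| ≤ 2 := by rw [hc]; split_ifs <;> norm_num
        have st1 := pairY z₁ z₂ c hcabs hP hfP
        have hP' : ¬(z₁.im = 0 ∧ (z₂ + (c : ℂ)).im = 0) := by simpa using hP
        have hrest : |s - c| ≤ 2 * n := by
          rcases le_or_gt 0 s with hsg | hsg
          · rw [hc, if_pos hsg]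
            rw [_root_.abs_of_nonneg hsg] at hs h2
            rw [_root_.abs_of_nonneg (by linarith)]
            linarith
          · rw [hc, if_neg (not_le.mpr hsg)]
            rw [_root_.abs_of_neg hsg] at hs h2
            rw [_root_.abs_of_nonpos (by linarith)]
            linarith
        have st2 := ih z₁ (z₂ + (c : ℂ)) (s - c) hrest hP' st1
        have c2 : z₂ + (c : ℂ) + ((s - c : ℝ) : ℂ) = z₂ + (s : ℂ) := by push_cast; ring
        rw [c2] at st2
        exact st2
  -- assembly
  set a : ℝ := x₁.im with ha
  set b : ℝ := x₂.im with hb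
  set u₁ : ℝ := Real.sqrt (1 + (a - 1) ^ 2) with hu₁
  set u₂ : ℝ := Real.sqrt (1 + (b - 1) ^ 2) with hu₂
  have s1 := stepIm1 Complex.I Complex.I (a - 1) (by simp) h0
  rw [← hu₁] at s1
  have good2 : ¬((Complex.I + ((a - 1 : ℝ) : ℂ) * I).im = 0 ∧
      (Complex.I + ((a - 1 : ℝ) : ℂ) * I).im ^ 2 + (Complex.I + ((u₁ : ℝ) : ℂ)).im ^ 2 +
        (Complex.I + ((u₁ : ℝ) : ℂ)).im * (b - 1) = 0) := by
    rintro ⟨hc1, hc2⟩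
    simp at hc1 hc2
    exact hX ⟨by linarith, by nlinarith⟩
  have s2 := stepIm2 _ _ (b - 1) good2 s1
  rw [← hu₂] at s2
  have imP1 : (Complex.I + ((a - 1 : ℝ) : ℂ) * I + ((u₂ : ℝ) : ℂ)).im = a := by simp
  have imP2 : (Complex.I + ((u₁ : ℝ) : ℂ) + ((b - 1 : ℝ) : ℂ) * I).im = b := by simp
  have hPim : ¬((Complex.I + ((a - 1 : ℝ) : ℂ) * I + ((u₂ : ℝ) : ℂ)).im = 0 ∧
      (Complex.I + ((u₁ : ℝ) : ℂ) + ((b - 1 : ℝ) : ℂ) * I).im = 0) := by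
    rw [imP1, imP2]; exact hX
  set s : ℝ := x₁.re - u₂ with hsdef
  have s3 := transX (Nat.ceil (|s| / 2)) _ _ s
    (by have := Nat.le_ceil (|s| / 2); linarith) hPim s2
  have hPim' : ¬((Complex.I + ((a - 1 : ℝ) : ℂ) * I + ((u₂ : ℝ) : ℂ) + (s : ℂ)).im = 0 ∧
      (Complex.I + ((u₁ : ℝ) : ℂ) + ((b - 1 : ℝ) : ℂ) * I).im = 0) := by
    rw [imP2]
    simpa [imP1] using hX
  set s' : ℝ := x₂.re - u₁ with hs'def
  have s4 := transY (Nat.ceil (|s'| / 2)) _ _ s'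
    (by have := Nat.le_ceil (|s'| / 2); linarith) hPim' s3
  have c1 : Complex.I + ((a - 1 : ℝ) : ℂ) * I + ((u₂ : ℝ) : ℂ) + (s : ℂ) = x₁ := by
    rw [hsdef, ha]
    push_cast
    linear_combination Complex.re_add_im x₁
  have c2 : Complex.I + ((u₁ : ℝ) : ℂ) + ((b - 1 : ℝ) : ℂ) * I + (s' : ℂ) = x₂ := by
    rw [hs'def, hb]
    push_cast
    linear_combination Complex.re_add_im x₂
  rw [c1, c2] at s4
  exact s4

/-- Lemma 3: under the conclusion of Theorem 1, for every `X ∈ ℂ² \ ℝ²`,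
`(i,i) ∈ A` implies `X ∈ A`, and `(i,i) ∈ B` implies `X ∈ B`. -/
theorem stmt_6 (f : ℂ × ℂ → ℂ × ℂ)
    (hf : ∀ X Y : ℂ × ℂ, (X.1 - Y.1) ^ 2 + (X.2 - Y.2) ^ 2 = 1 →
      ((f X).1 - (f Y).1) ^ 2 + ((f X).2 - (f Y).2) ^ 2 = 1)
    (h00 : f (0, 0) = (0, 0)) (h10 : f (1, 0) = (1, 0)) (h01 : f (0, 1) = (0, 1))
    (ρ : ℝ →+* ℂ)
    (hρ : ∀ x₁ x₂ : ℂ,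
      f (x₁, x₂) = (ρ x₁.re + ρ x₁.im * Complex.I, ρ x₂.re + ρ x₂.im * Complex.I) ∨
      f (x₁, x₂) = (ρ x₁.re - ρ x₁.im * Complex.I, ρ x₂.re - ρ x₂.im * Complex.I))
    (x₁ x₂ : ℂ) (hX : ¬(x₁.im = 0 ∧ x₂.im = 0)) :
    (f (Complex.I, Complex.I) =
        (ρ (Complex.I.re) + ρ (Complex.I.im) * Complex.I,
         ρ (Complex.I.re) + ρ (Complex.I.im) * Complex.I) →
      f (x₁, x₂) = (ρ x₁.re + ρ x₁.im * Complex.I, ρ x₂.re + ρ x₂.im * Complex.I)) ∧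
    (f (Complex.I, Complex.I) =
        (ρ (Complex.I.re) - ρ (Complex.I.im) * Complex.I,
         ρ (Complex.I.re) - ρ (Complex.I.im) * Complex.I) →
      f (x₁, x₂) = (ρ x₁.re - ρ x₁.im * Complex.I, ρ x₂.re - ρ x₂.im * Complex.I)) := by
  constructor
  · intro h
    rw [← gg_plus ρ x₁, ← gg_plus ρ x₂]
    apply main_lemma f hf ρ hρ 1 (Or.inl rfl) x₁ x₂ hX
    rw [h, gg_plus ρ Complex.I]
  · intro h
    rw [← gg_minus ρ x₁, ← gg_minus ρ x₂]
    apply main_lemma f hf ρ hρ (-1) (Or.inr rfl) x₁ x₂ hX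
    rw [h, gg_minus ρ Complex.I]
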